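/- Let q be an odd prime power. Then there exists a q-ary quantum MDS code with parameters [[q^2 − q, q^2 − q − 2d + 2, d]] for every 2 ≤ d ≤ q, assuming the Hermitian construction; equivalently, for each 1 ≤ k ≤ q−1 there exists a Hermitian self-orthogonal [q^2−q, k, q^2−q−k+1] MDS code over F_{q^2}. -/

import Mathlib

open Polynomial Finset

section Aux


lemma auxQ_card_fix (q : ℕ) (hq : 2 ≤ q) (F : Type) [Field F] [Fintype F] [DecidableEq F]
    (hF : Fintype.card F = q ^ 2) :
    (Finset.univ.filter fun x : F => x ^ q = x).card = q := by
  have hq1 : 1 < q := hq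
  have hq21 : 1 < q ^ 2 := Nat.one_lt_pow (by norm_num) hq1
  set P : F[X] := X ^ q - X with hP
  have hPdeg : P.natDegree = q := FiniteField.X_pow_card_sub_X_natDegree_eq F hq1
  have hPne : P ≠ 0 := FiniteField.X_pow_card_sub_X_ne_zero F hq1
  set Q : F[X] := X ^ (q ^ 2) - X with hQdef
  have hQdeg : Q.natDegree = q ^ 2 := FiniteField.X_pow_card_sub_X_natDegree_eq F hq21
  have hQne : Q ≠ 0 := FiniteField.X_pow_card_sub_X_ne_zero F hq21
  have hrootsQ : Q.roots = Finset.univ.val := by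
    have := FiniteField.roots_X_pow_card_sub_X F
    rwa [hF] at this
  have hdvd : P ∣ Q := by
    have e1 : q - 1 + 1 = q := by omega
    have e2 : q ^ 2 - 1 + 1 = q ^ 2 := by omega
    have h1 : P = X * (X ^ (q - 1) - 1) := by
      rw [mul_sub, mul_one, ← pow_succ', e1]
    have h2 : Q = X * (X ^ (q ^ 2 - 1) - 1) := by
      rw [mul_sub, mul_one, ← pow_succ', e2]
    have he : (q - 1) * (q + 1) + 1 = q ^ 2 := by
      obtain ⟨a, rfl⟩ : ∃ a, q = a + 1 := ⟨q - 1, by omega⟩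
      simp only [Nat.add_sub_cancel]
      ring
    have h3 : (X : F[X]) ^ (q - 1) - 1 ∣ X ^ (q ^ 2 - 1) - 1 := by
      have := sub_dvd_pow_sub_pow ((X : F[X]) ^ (q - 1)) 1 (q + 1)
      rw [one_pow, ← pow_mul] at this
      rwa [show (q - 1) * (q + 1) = q ^ 2 - 1 from by omega] at this
    rw [h1, h2]
    exact mul_dvd_mul_left _ h3
  have hle : P.roots ≤ Q.roots := Polynomial.roots.le_of_dvd hQne hdvd
  have hnodup : P.roots.Nodup := by
    have hn : Q.roots.Nodup := by rw [hrootsQ]; exact Finset.univ.nodup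
    exact Multiset.nodup_of_le hle hn
  obtain ⟨R, hR⟩ := hdvd
  have hRne : R ≠ 0 := by
    rintro rfl
    rw [mul_zero] at hR
    exact hQne hR
  have hsplit : Q.roots = P.roots + R.roots := by
    rw [hR]
    exact Polynomial.roots_mul (hR ▸ hQne)
  have hcardQ : Multiset.card Q.roots = q ^ 2 := by
    rw [hrootsQ]
    have := hF
    simpa using this
  have hRdeg : R.natDegree = q ^ 2 - q := by
    have hnd := Polynomial.natDegree_mul hPne hRne
    rw [← hR, hQdeg, hPdeg] at hnd
    omega
  have hcardR : Multiset.card R.roots ≤ q ^ 2 - q := hRdeg ▸ Polynomial.card_roots' R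
  have hcardP_le : Multiset.card P.roots ≤ q := hPdeg ▸ Polynomial.card_roots' P
  have hcardP : Multiset.card P.roots = q := by
    have hc := congrArg Multiset.card hsplit
    rw [Multiset.card_add, hcardQ] at hc
    have hqsq : q ≤ q ^ 2 := Nat.le_self_pow (by norm_num) q
    omega
  have hset : (Finset.univ.filter fun x : F => x ^ q = x) = P.roots.toFinset := by
    ext x
    simp only [Finset.mem_filter, Finset.mem_univ, true_and, Multiset.mem_toFinset,
      Polynomial.mem_roots hPne, Polynomial.IsRoot.def, hP, Polynomial.eval_sub,
      Polynomial.eval_pow, Polynomial.eval_X, sub_eq_zero]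
    exact ⟨fun h => (Polynomial.mem_roots hPne).mpr (by rw [Polynomial.IsRoot.def, hP]; simp [h]),
      fun h => by
        have h' := (Polynomial.mem_roots hPne).mp h
        rw [Polynomial.IsRoot.def, hP] at h'
        simpa [sub_eq_zero] using h'⟩
  rw [hset, Multiset.toFinset_card_of_nodup hnodup, hcardP]


lemma auxQ_sq_eq_one {F : Type} [Field F] {a : F} (h : a ^ 2 = 1) (h1 : a ≠ 1) : a = -1 := by
  have h2 : (a - 1) * (a + 1) = 0 := by linear_combination h
  rcases mul_eq_zero.mp h2 with h' | h'
  · exact absurd (sub_eq_zero.mp h') h1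
  · exact eq_neg_of_add_eq_zero_left h'

-- existence of η with η ≠ 0 and η ^ q = -η
lemma auxQ_eta (q : ℕ) (hodd : Odd q) (hq : 3 ≤ q)
    (F : Type) [Field F] [Fintype F] [DecidableEq F] (hF : Fintype.card F = q ^ 2) :
    ∃ η : F, η ≠ 0 ∧ η ^ q = -η := by
  obtain ⟨m, hm⟩ := hodd
  have hm1 : 1 ≤ m := by omega
  obtain ⟨g, hg⟩ := IsCyclic.exists_generator (α := Fˣ)
  have horder : orderOf g = q ^ 2 - 1 := by
    rw [orderOf_eq_card_of_forall_mem_zpowers hg, Nat.card_eq_fintype_card,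
      Fintype.card_units, hF]
  have hcard : q ^ 2 - 1 = 4 * m ^ 2 + 4 * m := by
    have : q ^ 2 = (2 * m + 1) ^ 2 := by rw [hm]
    have h2 : (2 * m + 1) ^ 2 = 4 * m ^ 2 + 4 * m + 1 := by ring
    omega
  set x : Fˣ := g ^ (2 * m ^ 2 + 2 * m) with hx
  have hx2 : x ^ 2 = 1 := by
    rw [hx, ← pow_mul, ← pow_orderOf_eq_one g, horder, hcard]
    congr 1
    ring
  have hxne : x ≠ 1 := by
    intro hx1
    have := orderOf_dvd_of_pow_eq_one (hx ▸ hx1)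
    rw [horder, hcard] at this
    have hle := Nat.le_of_dvd (by positivity) this
    nlinarith
  have hxF : ((x : F)) = -1 := by
    have h2 : ((x : F)) ^ 2 = 1 := by
      rw [← Units.val_pow_eq_pow_val, hx2, Units.val_one]
    apply auxQ_sq_eq_one h2
    intro h1
    exact hxne (Units.ext h1)
  refine ⟨((g : F)) ^ (m + 1), ?_, ?_⟩
  · exact pow_ne_zero _ (Units.ne_zero g)
  · have hpow : (((g : F)) ^ (m + 1)) ^ (q - 1) = -1 := by
      rw [← pow_mul]
      have : (m + 1) * (q - 1) = 2 * m ^ 2 + 2 * m := by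
        have : q - 1 = 2 * m := by omega
        rw [this]; ring
      rw [this]
      calc ((g : F)) ^ (2 * m ^ 2 + 2 * m) = ((x : F)) := by
            rw [hx, Units.val_pow_eq_pow_val]
        _ = -1 := hxF
    have hq1 : q - 1 + 1 = q := by omega
    calc (((g : F)) ^ (m + 1)) ^ q = (((g : F)) ^ (m + 1)) ^ (q - 1) * ((g : F)) ^ (m + 1) := by
          rw [← pow_succ, hq1]
      _ = -(((g : F)) ^ (m + 1)) := by rw [hpow]; ring

-- existence of (q+1)-th root for elements of the subfield
lemma auxQ_root (q : ℕ) (hq : 2 ≤ q)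
    (F : Type) [Field F] [Fintype F] [DecidableEq F] (hF : Fintype.card F = q ^ 2)
    (u : F) (hu : u ≠ 0) (huq : u ^ q = u) :
    ∃ v : F, v ^ (q + 1) = u ∧ v ≠ 0 := by
  obtain ⟨g, hg⟩ := IsCyclic.exists_generator (α := Fˣ)
  have horder : orderOf g = q ^ 2 - 1 := by
    rw [orderOf_eq_card_of_forall_mem_zpowers hg, Nat.card_eq_fintype_card,
      Fintype.card_units, hF]
  set uu : Fˣ := Units.mk0 u hu with huu
  obtain ⟨n, hn⟩ := (Submonoid.mem_powers_iff _ _).mp (mem_powers_iff_mem_zpowers.mpr (hg uu))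
  have huu1 : uu ^ (q - 1) = 1 := by
    have h1 : uu ^ q = uu := by
      ext
      simpa [huu] using huq
    have h2 : uu ^ (q - 1) * uu = uu := by
      rw [← pow_succ]
      rw [show q - 1 + 1 = q from by omega]
      exact h1
    calc uu ^ (q - 1) = uu ^ (q - 1) * uu * uu⁻¹ := by group
      _ = uu * uu⁻¹ := by rw [h2]
      _ = 1 := mul_inv_cancel uu
  have hdvd : (q + 1) * (q - 1) ∣ n * (q - 1) := by
    have h1 : g ^ (n * (q - 1)) = 1 := by
      rw [pow_mul, hn, huu1]
    have h2 := orderOf_dvd_of_pow_eq_one h1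
    rw [horder] at h2
    rwa [show q ^ 2 - 1 = (q + 1) * (q - 1) from by
      obtain ⟨a, rfl⟩ : ∃ a, q = a + 1 := ⟨q - 1, by omega⟩
      have : (a + 1 + 1) * (a + 1 - 1) + 1 = (a + 1) ^ 2 := by
        simp only [Nat.add_sub_cancel]
        ring
      omega] at h2
  have hdvd2 : (q + 1) ∣ n := by
    have := (Nat.mul_dvd_mul_iff_right (show 0 < q - 1 from by omega)).mp hdvd
    exact this
  refine ⟨((g : F)) ^ (n / (q + 1)), ?_, pow_ne_zero _ (Units.ne_zero g)⟩
  rw [← pow_mul, Nat.div_mul_cancel hdvd2]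
  have : ((g ^ n : Fˣ) : F) = u := by rw [hn]; rfl
  rw [← this, Units.val_pow_eq_pow_val]
end Aux

theorem quantum_MDS_length_q_sq_sub_q
    (q : ℕ) (hq : IsPrimePow q) (hodd : Odd q)
    (F : Type) [Field F] [Fintype F] [DecidableEq F] (hF : Fintype.card F = q ^ 2)
    (QMDS : ℕ → ℕ → ℕ → Prop)
    (hherm : ∀ (N k : ℕ) (C : Submodule F (Fin N → F)),
      Module.finrank F C = k →
      (∀ x ∈ C, x ≠ 0 → N - k + 1 ≤ hammingNorm x) →
      (∃ x ∈ C, x ≠ 0 ∧ hammingNorm x = N - k + 1) →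
      (∀ x ∈ C, ∀ y ∈ C, ∑ i, x i * (y i) ^ q = 0) →
      QMDS N (N - 2 * k) (k + 1)) :
    (∀ k : ℕ, 1 ≤ k → k ≤ q - 1 →
      ∃ C : Submodule F (Fin (q ^ 2 - q) → F),
        Module.finrank F C = k ∧
        (∀ x ∈ C, x ≠ 0 → q ^ 2 - q - k + 1 ≤ hammingNorm x) ∧
        (∃ x ∈ C, x ≠ 0 ∧ hammingNorm x = q ^ 2 - q - k + 1) ∧
        (∀ x ∈ C, ∀ y ∈ C, ∑ i, x i * (y i) ^ q = 0)) ∧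
    (∀ d : ℕ, 2 ≤ d → d ≤ q → QMDS (q ^ 2 - q) (q ^ 2 - q - 2 * d + 2) d) := by
  have hq2 : 2 ≤ q := hq.two_le
  have hq3 : 3 ≤ q := by obtain ⟨m, hm⟩ := hodd; omega
  have hqsq : q ^ 2 = q * q := sq q
  have hq2le : 2 * q ≤ q * q := Nat.mul_le_mul_right q (by omega)
  have hq3le : 3 * q ≤ q * q := Nat.mul_le_mul_right q hq3
  -- Frobenius x ↦ x ^ q as a ring hom
  set r := ringChar F with hrdef
  haveI hFr : CharP F r := ringChar.charP F
  obtain ⟨nn, hrprime, hcard⟩ := FiniteField.card F r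
  haveI := Fact.mk hrprime
  haveI : ExpChar F r := ExpChar.prime hrprime
  have hrs : ∃ s : ℕ, r ^ s = q := by
    obtain ⟨p, s, hp, hs, hpq⟩ := hq
    have hp' : Nat.Prime p := Nat.prime_iff.mpr hp
    have hpr : p = r := by
      have hdv : p ∣ r ^ (nn : ℕ) := by
        rw [← hcard, hF, ← hpq, ← pow_mul]
        exact dvd_pow_self p (by positivity)
      exact (Nat.prime_dvd_prime_iff_eq hp' hrprime).mp (hp'.dvd_of_dvd_pow hdv)
    exact ⟨s, by rw [← hpr, hpq]⟩
  obtain ⟨s, hrsq⟩ := hrs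
  set φ : F →+* F := iterateFrobenius F r s with hφdef
  have hφ : ∀ x : F, φ x = x ^ q := by
    intro x
    rw [hφdef, iterateFrobenius_def, hrsq]
  have hxq2 : ∀ x : F, (x ^ q) ^ q = x := by
    intro x
    rw [← pow_mul, ← hqsq, ← hF]
    exact FiniteField.pow_card x
  have hpow0 : ∀ m : ℕ, m < q ^ 2 - 1 → ∑ x : F, x ^ m = 0 := by
    intro m hm
    exact FiniteField.sum_pow_lt_card_sub_one (K := F) m (by rw [hF]; exact hm)
  -- the evaluation set
  set S : Finset F := Finset.univ.filter (fun x : F => ¬ x ^ q = x) with hSdef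
  have hScard : S.card = q ^ 2 - q := by
    have h1 := Finset.card_filter_add_card_filter_not
      (s := (Finset.univ : Finset F)) (fun x : F => x ^ q = x)
    rw [auxQ_card_fix q hq2 F hF, Finset.card_univ, hF] at h1
    rw [hSdef]
    omega
  set n := q ^ 2 - q with hndef
  have hnq : q ≤ n ∧ n ≤ q ^ 2 := by constructor <;> omega
  set e : Fin n ≃ S := (S.equivFinOfCardEq hScard).symm with hedef
  -- multipliers
  obtain ⟨η, hηne, hηq⟩ := auxQ_eta q hodd hq3 F hF
  have hufix : ∀ α : F, ((α ^ q - α) * η) ^ q = (α ^ q - α) * η := by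
    intro α
    have h1 : ((α ^ q - α) * η) ^ q = φ ((α ^ q - α) * η) := (hφ _).symm
    rw [h1]
    simp only [map_mul, map_sub]
    simp only [hφ]
    rw [hxq2, hηq]
    ring
  have hune : ∀ α : F, α ∈ S → (α ^ q - α) * η ≠ 0 := by
    intro α hα
    have hα' : ¬ α ^ q = α := by
      rw [hSdef] at hα
      exact (Finset.mem_filter.mp hα).2
    exact mul_ne_zero (sub_ne_zero.mpr hα') hηne
  set v : F → F := fun α =>
    if h : ∃ w : F, w ^ (q + 1) = (α ^ q - α) * η ∧ w ≠ 0 then h.choose else 1 with hvdef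
  have hv : ∀ α : F, α ∈ S → (v α) ^ (q + 1) = (α ^ q - α) * η ∧ v α ≠ 0 := by
    intro α hα
    have hex : ∃ w : F, w ^ (q + 1) = (α ^ q - α) * η ∧ w ≠ 0 :=
      auxQ_root q hq2 F hF _ (hune α hα) (hufix α)
    rw [hvdef]
    simp only [dif_pos hex]
    exact hex.choose_spec
  -- key construction
  have key : ∀ k : ℕ, 1 ≤ k → k ≤ q - 1 →
      ∃ C : Submodule F (Fin n → F),
        Module.finrank F C = k ∧
        (∀ x ∈ C, x ≠ 0 → n - k + 1 ≤ hammingNorm x) ∧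
        (∃ x ∈ C, x ≠ 0 ∧ hammingNorm x = n - k + 1) ∧
        (∀ x ∈ C, ∀ y ∈ C, ∑ i, x i * (y i) ^ q = 0) := by
    intro k hk1 hk2
    set M : Matrix (Fin n) (Fin k) F := fun idx i => v (e idx) * ((e idx : F)) ^ (i : ℕ)
      with hMdef
    set L := M.mulVecLin with hLdef
    have hLapply : ∀ (c : Fin k → F) idx,
        M.mulVec c idx = v (e idx) * ∑ i : Fin k, c i * ((e idx : F)) ^ (i : ℕ) := by
      intro c idx
      simp only [Matrix.mulVec, dotProduct, hMdef, Finset.mul_sum]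
      exact Finset.sum_congr rfl fun i _ => by ring
    -- polynomial bridge
    set pol : (Fin k → F) → F[X] := fun c => ∑ i : Fin k, Polynomial.C (c i) * X ^ (i : ℕ)
      with hpoldef
    have hpoleval : ∀ (c : Fin k → F) (α : F),
        (pol c).eval α = ∑ i : Fin k, c i * α ^ (i : ℕ) := by
      intro c α
      rw [hpoldef]
      simp [Polynomial.eval_finset_sum]
    have hpoldeg : ∀ c : Fin k → F, (pol c).natDegree ≤ k - 1 := by
      intro c
      apply Polynomial.natDegree_sum_le_of_forall_le
      intro i _
      refine le_trans (Polynomial.natDegree_C_mul_le _ _) ?_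
      rw [Polynomial.natDegree_X_pow]
      have := i.isLt
      omega
    have hpolcoeff : ∀ (c : Fin k → F) (j : Fin k), (pol c).coeff (j : ℕ) = c j := by
      intro c j
      rw [hpoldef]
      simp only [Polynomial.finset_sum_coeff, Polynomial.coeff_C_mul, Polynomial.coeff_X_pow]
      rw [Finset.sum_eq_single j]
      · simp
      · intro b _ hbj
        have hne : ¬ ((j : ℕ) = (b : ℕ)) := fun h => hbj (Fin.ext h.symm)
        simp [hne]
      · intro h
        exact absurd (Finset.mem_univ j) h
    have hzeros : ∀ c : Fin k → F, pol c ≠ 0 →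
        ((Finset.univ : Finset (Fin n)).filter
          fun idx => (pol c).eval ((e idx : F)) = 0).card ≤ k - 1 := by
      intro c hc
      set Z := ((Finset.univ : Finset (Fin n)).filter
        fun idx => (pol c).eval ((e idx : F)) = 0).image (fun idx => ((e idx : F))) with hZ
      have hinj : Function.Injective (fun idx : Fin n => ((e idx : F))) := by
        intro a b hab
        exact e.injective (Subtype.ext hab)
      have hcardZ : Z.card = ((Finset.univ : Finset (Fin n)).filter
          fun idx => (pol c).eval ((e idx : F)) = 0).card :=
        Finset.card_image_of_injective _ hinj
      have hsub : Z.val ⊆ (pol c).roots := by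
        intro x hx
        rw [Finset.mem_val, hZ, Finset.mem_image] at hx
        obtain ⟨idx, hidx, rfl⟩ := hx
        rw [Finset.mem_filter] at hidx
        exact (Polynomial.mem_roots hc).mpr hidx.2
      calc ((Finset.univ : Finset (Fin n)).filter
            fun idx => (pol c).eval ((e idx : F)) = 0).card
          = Z.card := hcardZ.symm
        _ ≤ (pol c).natDegree := Polynomial.card_le_degree_of_subset_roots hsub
        _ ≤ k - 1 := hpoldeg c
    have hinjL : Function.Injective L := by
      rw [injective_iff_map_eq_zero]
      intro c hc0
      have hev : ∀ idx : Fin n, (pol c).eval ((e idx : F)) = 0 := by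
        intro idx
        have h1 : M.mulVec c idx = 0 := congrFun hc0 idx
        rw [hLapply] at h1
        rcases mul_eq_zero.mp h1 with h | h
        · exact absurd h (hv (e idx) (e idx).2).2
        · rw [hpoleval]; exact h
      have hpc : pol c = 0 := by
        by_contra hne
        have hb := hzeros c hne
        have hall : ((Finset.univ : Finset (Fin n)).filter
            fun idx => (pol c).eval ((e idx : F)) = 0) = Finset.univ :=
          Finset.filter_true_of_mem (fun idx _ => hev idx)
        rw [hall, Finset.card_univ, Fintype.card_fin] at hb
        omega
      funext j
      rw [← hpolcoeff c j, hpc]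
      simp
    -- the norm/zero-count identity
    have hsum : ∀ c : Fin k → F,
        ((Finset.univ : Finset (Fin n)).filter fun idx => M.mulVec c idx = 0).card
          + hammingNorm (M.mulVec c) = n := by
      intro c
      have h1 := Finset.card_filter_add_card_filter_not
        (s := (Finset.univ : Finset (Fin n))) (fun idx => M.mulVec c idx = 0)
      rw [Finset.card_univ, Fintype.card_fin] at h1
      have h2 : hammingNorm (M.mulVec c)
          = ((Finset.univ : Finset (Fin n)).filter fun idx => ¬ M.mulVec c idx = 0).card := by
        simp only [hammingNorm, ne_eq]
      rw [h2]
      exact h1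
    have hzfilter : ∀ c : Fin k → F,
        ((Finset.univ : Finset (Fin n)).filter fun idx => M.mulVec c idx = 0)
          = ((Finset.univ : Finset (Fin n)).filter
              fun idx => (pol c).eval ((e idx : F)) = 0) := by
      intro c
      apply Finset.filter_congr
      intro idx _
      rw [hLapply c idx, ← hpoleval c]
      constructor
      · intro h
        rcases mul_eq_zero.mp h with h' | h'
        · exact absurd h' (hv (e idx) (e idx).2).2
        · exact h'
      · intro h
        rw [h, mul_zero]
    refine ⟨LinearMap.range L, ?_, ?_, ?_, ?_⟩
    · -- finrank
      rw [LinearMap.finrank_range_of_inj hinjL]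
      simp [Module.finrank_pi]
    · -- minimum distance lower bound
      rintro x hx hxne
      obtain ⟨c, rfl⟩ := LinearMap.mem_range.mp hx
      have hxc : L c = M.mulVec c := rfl
      rw [hxc] at hxne ⊢
      have hpcne : pol c ≠ 0 := by
        intro hpc
        apply hxne
        funext idx
        rw [hLapply c idx, ← hpoleval c, hpc]
        simp
      have hz := hzeros c hpcne
      have hzf := hzfilter c
      have hs := hsum c
      rw [hzf] at hs
      omega
    · -- a word of weight exactly n - k + 1
      obtain ⟨T, hTsub, hTcard⟩ := Finset.exists_subset_card_eq
        (show k - 1 ≤ S.card by rw [hScard]; omega)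
      set p0 : F[X] := ∏ β ∈ T, (X - Polynomial.C β) with hp0def
      have hp0deg : p0.natDegree = k - 1 := by
        rw [hp0def, Polynomial.natDegree_prod _ _ (fun β _ => Polynomial.X_sub_C_ne_zero β)]
        simp [Polynomial.natDegree_X_sub_C, hTcard]
      set c : Fin k → F := fun i => p0.coeff (i : ℕ) with hcdef
      have hc_eval : ∀ α : F, ∑ i : Fin k, c i * α ^ (i : ℕ) = p0.eval α := by
        intro α
        rw [Polynomial.eval_eq_sum_range' (show p0.natDegree < k by omega)]
        exact Fin.sum_univ_eq_sum_range (fun i => p0.coeff i * α ^ i) k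
      have hxidx : ∀ idx : Fin n, M.mulVec c idx = v (e idx) * p0.eval ((e idx : F)) := by
        intro idx
        rw [hLapply c idx, hc_eval]
      have hzero_iff : ∀ idx : Fin n, M.mulVec c idx = 0 ↔ ((e idx : F)) ∈ T := by
        intro idx
        rw [hxidx idx]
        constructor
        · intro h
          rcases mul_eq_zero.mp h with h' | h'
          · exact absurd h' (hv (e idx) (e idx).2).2
          · rw [hp0def, Polynomial.eval_prod] at h'
            obtain ⟨β, hβT, hβ⟩ := Finset.prod_eq_zero_iff.mp h'
            simp only [Polynomial.eval_sub, Polynomial.eval_X, Polynomial.eval_C,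
              sub_eq_zero] at hβ
            rwa [hβ]
        · intro h
          have : p0.eval ((e idx : F)) = 0 := by
            rw [hp0def, Polynomial.eval_prod]
            apply Finset.prod_eq_zero h
            simp
          rw [this, mul_zero]
      have hzcard : ((Finset.univ : Finset (Fin n)).filter
          fun idx => M.mulVec c idx = 0).card = k - 1 := by
        rw [← hTcard]
        apply Finset.card_bij (fun idx _ => ((e idx : F)))
        · intro idx hidx
          exact (hzero_iff idx).mp (Finset.mem_filter.mp hidx).2
        · intro a ha b hb hab
          exact e.injective (Subtype.ext hab)
        · intro β hβ
          refine ⟨e.symm ⟨β, hTsub hβ⟩, ?_, ?_⟩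
          · rw [Finset.mem_filter]
            refine ⟨Finset.mem_univ _, ?_⟩
            rw [hzero_iff, Equiv.apply_symm_apply]
            exact hβ
          · rw [Equiv.apply_symm_apply]
      have hs := hsum c
      rw [hzcard] at hs
      refine ⟨M.mulVec c, LinearMap.mem_range.mpr ⟨c, rfl⟩, ?_, ?_⟩
      · intro h0
        rw [h0, hammingNorm_zero] at hs
        omega
      · omega
    · -- Hermitian self-orthogonality
      rintro x hx y hy
      obtain ⟨c, rfl⟩ := LinearMap.mem_range.mp hx
      obtain ⟨c', rfl⟩ := LinearMap.mem_range.mp hy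
      show ∑ idx : Fin n, M.mulVec c idx * (M.mulVec c' idx) ^ q = 0
      set W : F → F := fun α => ((α ^ q - α) * η) *
        ((∑ i : Fin k, c i * α ^ (i : ℕ)) * (∑ j : Fin k, c' j * α ^ (j : ℕ)) ^ q) with hWdef
      have step1 : ∀ idx : Fin n,
          M.mulVec c idx * (M.mulVec c' idx) ^ q = W ((e idx : F)) := by
        intro idx
        rw [hLapply c idx, hLapply c' idx, mul_pow]
        have hvv : v (e idx) * (v ((e idx : F))) ^ q = (((e idx : F)) ^ q - ((e idx : F))) * η := by
          rw [← pow_succ']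
          exact (hv (e idx) (e idx).2).1
        rw [hWdef]
        calc v (e idx) * (∑ i : Fin k, c i * ((e idx : F)) ^ (i : ℕ)) *
              ((v ((e idx : F))) ^ q * (∑ j : Fin k, c' j * ((e idx : F)) ^ (j : ℕ)) ^ q)
            = (v (e idx) * (v ((e idx : F))) ^ q) *
              ((∑ i : Fin k, c i * ((e idx : F)) ^ (i : ℕ)) *
                (∑ j : Fin k, c' j * ((e idx : F)) ^ (j : ℕ)) ^ q) := by ring
          _ = _ := by rw [hvv]
      rw [Finset.sum_congr rfl (fun idx _ => step1 idx)]
      have step2 : ∑ idx : Fin n, W ((e idx : F)) = ∑ α ∈ S, W α := by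
        rw [Equiv.sum_comp e (fun a : S => W ((a : F)))]
        exact Finset.sum_coe_sort S W
      rw [step2]
      have step3 : ∑ α ∈ S, W α = ∑ α : F, W α := by
        apply Finset.sum_subset (Finset.subset_univ S)
        intro α _ hα
        have hfix : α ^ q = α := by
          by_contra hne
          exact hα (by rw [hSdef]; exact Finset.mem_filter.mpr ⟨Finset.mem_univ _, hne⟩)
        rw [hWdef]
        simp only [hfix, sub_self, zero_mul]
      rw [step3]
      have hWexp : ∀ α : F, W α = ∑ i : Fin k, ∑ j : Fin k,
          (c i * φ (c' j) * η) *
            (α ^ (q + ((i : ℕ) + q * (j : ℕ))) - α ^ (1 + ((i : ℕ) + q * (j : ℕ)))) := by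
        intro α
        have hB : (∑ j : Fin k, c' j * α ^ (j : ℕ)) ^ q
            = ∑ j : Fin k, φ (c' j) * α ^ (q * (j : ℕ)) := by
          rw [← hφ, map_sum]
          refine Finset.sum_congr rfl fun j _ => ?_
          rw [map_mul, map_pow, hφ α, ← pow_mul]
        rw [hWdef]
        simp only []
        rw [hB, Finset.sum_mul_sum, Finset.mul_sum]
        refine Finset.sum_congr rfl fun i _ => ?_
        rw [Finset.mul_sum]
        refine Finset.sum_congr rfl fun j _ => ?_
        simp only [pow_add, pow_one]
        ring
      rw [Finset.sum_congr rfl (fun α _ => hWexp α)]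
      rw [Finset.sum_comm]
      refine Finset.sum_eq_zero fun i _ => ?_
      rw [Finset.sum_comm]
      refine Finset.sum_eq_zero fun j _ => ?_
      have hi : (i : ℕ) ≤ q - 2 := by have := i.isLt; omega
      have hj : (j : ℕ) ≤ q - 2 := by have := j.isLt; omega
      have hmul : q * (j : ℕ) ≤ q * (q - 2) := Nat.mul_le_mul_left q hj
      have hmul2 : q * (q - 2) + q * 2 = q * q := by
        rw [← Nat.mul_add]
        congr 1
        omega
      rw [← Finset.mul_sum, Finset.sum_sub_distrib,
        hpow0 (q + ((i : ℕ) + q * (j : ℕ))) (by omega),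
        hpow0 (1 + ((i : ℕ) + q * (j : ℕ))) (by omega), sub_zero, mul_zero]
  constructor
  · intro k hk1 hk2
    exact key k hk1 hk2
  · intro d hd2 hdq
    obtain ⟨C, h1, h2, h3, h4⟩ := key (d - 1) (by omega) (by omega)
    have hres := hherm (q ^ 2 - q) (d - 1) C h1 h2 h3 h4
    have e1 : (d - 1) + 1 = d := by omega
    have e2 : q ^ 2 - q - 2 * (d - 1) = q ^ 2 - q - 2 * d + 2 := by omega
    rwa [e1, e2] at hres
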